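/- arXiv:1604.02180 — 2 statements merged into one kernel-verified Lean document; each statement's English description precedes it below -/
import Mathlib

section
/- Let R be a finite index set and let (L_r)_{r∈R} be mutually independent nonnegative real-valued random variables on a common probability space with 0 ≤ L_r ≤ m_r·n_r almost surely, where n_r are natural numbers and m_r are constants with 0 < m_r ≤ d for a constant d > 0. Suppose E[∑_{r∈R} L_r] ≤ 2·d and set Δ_E := ∑_{r∈R} n_r². Then for every real n ≥ 1, P( ∑_{r∈R} L_r ≥ (2 + √((3/2)·(log n)·Δ_E))·d ) ≤ n^{−2}. -/
open MeasureTheory ProbabilityTheory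

section Auxiliary
open Real

/-- Core of Hoeffding's lemma: the Bernoulli mgf bound. -/
lemma bernoulli_mgf_le (p : ℝ) (hp0 : 0 ≤ p) (hp1 : p ≤ 1) (u : ℝ) (hu : 0 ≤ u) :
    1 - p + p * exp u ≤ exp (p * u + u ^ 2 / 8) := by
  set h : ℝ → ℝ := fun x => 1 - p + p * exp x with hh
  have hpos : ∀ x, 0 < h x := by
    intro x
    rcases eq_or_lt_of_le hp0 with h0 | h0
    · simp [hh, ← h0]
    · have : 0 < p * exp x := mul_pos h0 (exp_pos x)
      have : (0:ℝ) ≤ 1 - p := by linarith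
      simp only [hh]; nlinarith [exp_pos x]
  set G : ℝ → ℝ := fun x => p + x / 4 - p * exp x / h x with hG
  set g : ℝ → ℝ := fun x => p * x + x ^ 2 / 8 - Real.log (h x) with hg
  have hdh : ∀ x, HasDerivAt h (p * exp x) x := by
    intro x
    exact ((Real.hasDerivAt_exp x).const_mul p).const_add (1 - p)
  have hdg : ∀ x, HasDerivAt g (G x) x := by
    intro x
    have h1 : HasDerivAt (fun x => Real.log (h x)) (p * exp x / h x) x :=
      (hdh x).log (hpos x).ne'
    have h2 : HasDerivAt (fun x => p * x + x ^ 2 / 8) (p + x / 4) x := by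
      have := ((hasDerivAt_pow 2 x).div_const 8).const_add 0
      have h3 : HasDerivAt (fun x : ℝ => p * x) p x := by
        simpa using (hasDerivAt_id x).const_mul p
      simpa [Nat.cast_ofNat, pow_one] using
        (h3.add ((hasDerivAt_pow 2 x).div_const 8)).sub_const 0 |>.congr_deriv (by ring)
    exact h2.sub h1
  have hdG : ∀ x, HasDerivAt G ((p * exp x / h x - 1 / 2) ^ 2) x := by
    intro x
    have hq : HasDerivAt (fun x => p * exp x / h x)
        ((p * exp x * h x - p * exp x * (p * exp x)) / (h x) ^ 2) x :=
      ((hasDerivAt_exp x).const_mul p).div (hdh x) (hpos x).ne'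
    have h2 : HasDerivAt (fun x => p + x / 4) (1 / 4) x := by
      simpa using ((hasDerivAt_id x).div_const 4).const_add p
    have := h2.sub hq
    have hhx := (hpos x).ne'
    refine this.congr_deriv ?_
    field_simp
    ring
  have hGmono : Monotone G :=
    monotone_of_deriv_nonneg (fun x => (hdG x).differentiableAt) (fun x => by
      rw [(hdG x).deriv]; positivity)
  have hG0 : G 0 = 0 := by
    simp only [hG, hh]
    rw [exp_zero]
    have : 1 - p + p * 1 = 1 := by ring
    rw [this]
    ring
  have hGnn : ∀ x ∈ Set.Ici (0:ℝ), 0 ≤ G x := fun x hx => hG0 ▸ hGmono hx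
  have hgmono : MonotoneOn g (Set.Ici 0) := by
    apply monotoneOn_of_deriv_nonneg (convex_Ici 0)
      (Continuous.continuousOn (by
        have : Continuous h := by continuity
        exact (continuous_const.mul continuous_id').add
          ((continuous_pow 2).div_const 8) |>.sub ((this.log (fun x => (hpos x).ne')))))
      (fun x hx => ((hdg x).differentiableAt).differentiableWithinAt)
    intro x hx
    rw [(hdg x).deriv]
    exact hGnn x (interior_subset hx)
  have hg0 : g 0 = 0 := by simp [hg, hh]
  have hgu : 0 ≤ g u := by
    have := hgmono (Set.self_mem_Ici) (Set.mem_Ici.2 hu) hu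
    simpa [hg0] using this
  have hlog : Real.log (h u) ≤ p * u + u ^ 2 / 8 := by
    simp only [hg] at hgu; linarith
  calc h u = exp (Real.log (h u)) := (exp_log (hpos u)).symm
    _ ≤ exp (p * u + u ^ 2 / 8) := exp_le_exp.2 hlog

/-- Hoeffding's lemma for `[0,c]`-valued variables. -/
lemma mgf_le_hoeffding {Ω : Type*} [MeasurableSpace Ω] (μ : Measure Ω)
    [IsProbabilityMeasure μ] (X : Ω → ℝ) (c t : ℝ) (hc : 0 ≤ c) (ht : 0 ≤ t)
    (hX : Measurable X) (hb : ∀ᵐ ω ∂μ, 0 ≤ X ω ∧ X ω ≤ c) :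
    mgf X μ t ≤ exp (t * (∫ ω, X ω ∂μ) + t ^ 2 * c ^ 2 / 8) := by
  have hXint : Integrable X μ := by
    refine Integrable.mono' (integrable_const c) hX.aestronglyMeasurable ?_
    filter_upwards [hb] with ω ⟨h0, h1⟩
    rw [Real.norm_eq_abs, abs_of_nonneg h0]; exact h1
  rcases eq_or_lt_of_le hc with h0 | h0
  · have hX0 : ∀ᵐ ω ∂μ, X ω = 0 := by
      filter_upwards [hb] with ω ⟨ha, hbb⟩; rw [← h0] at hbb; linarith
    have hmgf : mgf X μ t = 1 := by
      rw [mgf]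
      have : (fun ω => exp (t * X ω)) =ᵐ[μ] fun _ => (1:ℝ) := by
        filter_upwards [hX0] with ω h; simp [h]
      rw [integral_congr_ae this]; simp
    have hEX : ∫ ω, X ω ∂μ = 0 := by
      rw [integral_congr_ae hX0]; simp
    rw [hmgf, hEX, ← h0]
    simp [Real.exp_nonneg, Real.one_le_exp_iff]
  · -- c > 0
    set p : ℝ := (∫ ω, X ω ∂μ) / c with hp
    have hEXnn : 0 ≤ ∫ ω, X ω ∂μ :=
      integral_nonneg_of_ae (by filter_upwards [hb] with ω h; exact h.1)
    have hEXle : ∫ ω, X ω ∂μ ≤ c := by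
      calc ∫ ω, X ω ∂μ ≤ ∫ _, c ∂μ :=
            integral_mono_ae hXint (integrable_const c)
              (by filter_upwards [hb] with ω h; exact h.2)
        _ = c := by simp
    have hp0 : 0 ≤ p := div_nonneg hEXnn hc
    have hp1 : p ≤ 1 := (div_le_one h0).2 hEXle
    have key : mgf X μ t ≤ 1 - p + p * exp (t * c) := by
      rw [mgf]
      have hptw : ∀ᵐ ω ∂μ, exp (t * X ω) ≤
          1 + (exp (t * c) - 1) / c * X ω := by
        filter_upwards [hb] with ω ⟨ha, hbb⟩
        have hlam0 : 0 ≤ X ω / c := div_nonneg ha hc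
        have hlam1 : X ω / c ≤ 1 := (div_le_one h0).2 hbb
        have := convexOn_exp.2 (Set.mem_univ (0:ℝ)) (Set.mem_univ (t * c))
          (by linarith : (0:ℝ) ≤ 1 - X ω / c) hlam0 (by ring)
        simp only [smul_eq_mul, mul_zero, zero_add, Real.exp_zero] at this
        have harg : X ω / c * (t * c) = t * X ω := by field_simp
        rw [harg] at this
        calc exp (t * X ω) ≤ (1 - X ω / c) * 1 + X ω / c * exp (t * c) := this
          _ = 1 + (exp (t * c) - 1) / c * X ω := by field_simp; ring
      have hint2 : Integrable (fun ω => 1 + (exp (t * c) - 1) / c * X ω) μ :=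
        (integrable_const 1).add (hXint.const_mul _)
      have hint1 : Integrable (fun ω => exp (t * X ω)) μ := by
        refine Integrable.mono' (integrable_const (max 1 (exp (t * c))))
          ((hX.const_mul t).exp.aestronglyMeasurable) ?_
        filter_upwards [hb] with ω ⟨ha, hbb⟩
        rw [Real.norm_eq_abs, abs_of_pos (exp_pos _)]
        rcases le_total (t * X ω) 0 with h | h
        · exact le_max_of_le_left (by simpa using Real.exp_le_exp.2 h)
        · exact le_max_of_le_right (Real.exp_le_exp.2
            (mul_le_mul_of_nonneg_left hbb ht))
      calc ∫ ω, exp (t * X ω) ∂μ ≤ ∫ ω, 1 + (exp (t * c) - 1) / c * X ω ∂μ :=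
            integral_mono_ae hint1 hint2 hptw
        _ = 1 + (exp (t * c) - 1) / c * ∫ ω, X ω ∂μ := by
            rw [integral_add (integrable_const 1) (hXint.const_mul _),
              integral_const, integral_const_mul]
            simp
        _ = 1 - p + p * exp (t * c) := by rw [hp]; field_simp; ring
    calc mgf X μ t ≤ 1 - p + p * exp (t * c) := key
      _ ≤ exp (p * (t * c) + (t * c) ^ 2 / 8) :=
          bernoulli_mgf_le p hp0 hp1 (t * c) (mul_nonneg ht hc)
      _ = exp (t * (∫ ω, X ω ∂μ) + t ^ 2 * c ^ 2 / 8) := by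
          rw [hp]; congr 1; field_simp


lemma integrable_exp_mul_of_bdd {Ω : Type*} [MeasurableSpace Ω] (μ : Measure Ω)
    [IsProbabilityMeasure μ] (X : Ω → ℝ) (c t : ℝ) (ht : 0 ≤ t)
    (hX : Measurable X) (hb : ∀ᵐ ω ∂μ, 0 ≤ X ω ∧ X ω ≤ c) :
    Integrable (fun ω => exp (t * X ω)) μ := by
  refine Integrable.mono' (integrable_const (max 1 (exp (t * c))))
    ((hX.const_mul t).exp.aestronglyMeasurable) ?_
  filter_upwards [hb] with ω ⟨ha, hbb⟩
  rw [Real.norm_eq_abs, abs_of_pos (exp_pos _)]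
  rcases le_total (t * X ω) 0 with h | h
  · exact le_max_of_le_left (by simpa using Real.exp_le_exp.2 h)
  · exact le_max_of_le_right (Real.exp_le_exp.2 (mul_le_mul_of_nonneg_left hbb ht))

end Auxiliary

/-- Edge capacity violation bound in the cost-minimization variant: independent loads
`L r ∈ [0, m r * n r]`, single-demand bounds `m r ≤ d`, expected total load at most
`2 d`.  With `Δ_E = ∑ (n r)²`, the probability of exceeding
`(2 + √((3/2) (log n) Δ_E)) d` is at most `n⁻²`. -/
theorem edge_capacity_violation_cost {Ω : Type*} [MeasurableSpace Ω] (μ : Measure Ω)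
    [IsProbabilityMeasure μ]
    {R : Type*} [Fintype R] (L : R → Ω → ℝ) (m : R → ℝ) (nE : R → ℕ) (d : ℝ)
    (hmeas : ∀ r, Measurable (L r))
    (hindep : iIndepFun L μ)
    (hbdd : ∀ r, ∀ᵐ ω ∂μ, 0 ≤ L r ω ∧ L r ω ≤ m r * (nE r : ℝ))
    (hd : 0 < d)
    (hm : ∀ r, 0 < m r ∧ m r ≤ d)
    (hE : ∫ ω, ∑ r, L r ω ∂μ ≤ 2 * d) :
    ∀ n : ℝ, 1 ≤ n →
      μ {ω | (2 + Real.sqrt ((3 / 2) * Real.log n * ∑ r, ((nE r : ℝ)) ^ 2)) * d ≤ ∑ r, L r ω}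
        ≤ ENNReal.ofReal (n ^ (-2 : ℝ)) := by
  open Real in
  intro n hn
  have hn0 : (0:ℝ) < n := lt_of_lt_of_le one_pos hn
  have hlogn : 0 ≤ Real.log n := Real.log_nonneg hn
  set Δ : ℝ := ∑ r, ((nE r : ℝ)) ^ 2 with hΔ
  have hΔnn : 0 ≤ Δ := Finset.sum_nonneg fun r _ => sq_nonneg _
  set T : ℝ := Real.sqrt ((3 / 2) * Real.log n * Δ) with hT
  have hTnn : 0 ≤ T := Real.sqrt_nonneg _
  have hT2 : T ^ 2 = (3 / 2) * Real.log n * Δ :=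
    Real.sq_sqrt (by positivity)
  set c : R → ℝ := fun r => m r * (nE r : ℝ) with hc
  have hcnn : ∀ r, 0 ≤ c r := fun r => mul_nonneg (hm r).1.le (Nat.cast_nonneg _)
  set C : ℝ := ∑ r, (c r) ^ 2 with hC
  have hCnn : 0 ≤ C := Finset.sum_nonneg fun r _ => sq_nonneg _
  have hCle : C ≤ d ^ 2 * Δ := by
    rw [hC, hΔ, Finset.mul_sum]
    refine Finset.sum_le_sum fun r _ => ?_
    have h1 := (hm r).1
    have h2 := (hm r).2
    have h3 : (0:ℝ) ≤ (nE r : ℝ) := Nat.cast_nonneg _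
    simp only [hc]
    have h4 : m r ^ 2 ≤ d ^ 2 := by nlinarith
    nlinarith [mul_le_mul_of_nonneg_right h4 (sq_nonneg ((nE r : ℝ)))]
  have hnrpow : n ^ (-2 : ℝ) = exp (-2 * Real.log n) := by
    rw [Real.rpow_def_of_pos hn0]; ring_nf
  rcases eq_or_lt_of_le hCnn with hC0 | hC0
  · -- C = 0 : all loads vanish a.s.
    have hc0 : ∀ r, c r = 0 := by
      intro r
      have := (Finset.sum_eq_zero_iff_of_nonneg
        (fun r _ => sq_nonneg (c r))).1 hC0.symm r (Finset.mem_univ r)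
      exact pow_eq_zero_iff (n := 2) (by norm_num) |>.1 this
    have hS0 : ∀ᵐ ω ∂μ, ∑ r, L r ω = 0 := by
      have : ∀ᵐ ω ∂μ, ∀ r, 0 ≤ L r ω ∧ L r ω ≤ m r * (nE r : ℝ) :=
        (MeasureTheory.ae_all_iff).2 hbdd
      filter_upwards [this] with ω hω
      refine Finset.sum_eq_zero fun r _ => ?_
      have := hω r
      have hcr := hc0 r
      simp only [hc] at hcr
      rw [hcr] at this
      linarith [this.1, this.2]
    have hnull : μ {ω | (2 + T) * d ≤ ∑ r, L r ω} = 0 := by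
      refine measure_eq_zero_iff_ae_notMem.mpr ?_
      filter_upwards [hS0] with ω hω
      simp only [Set.mem_setOf_eq, hω, not_le]
      nlinarith
    rw [hnull]
    exact bot_le
  · -- C > 0 : Chernoff + Hoeffding
    set s : ℝ := 4 * T * d / C with hs
    have hsnn : 0 ≤ s := by positivity
    set S : Ω → ℝ := ∑ r, L r with hS
    have hSapp : ∀ ω, S ω = ∑ r, L r ω := fun ω => by simp [hS]
    have hint : ∀ r, Integrable (fun ω => exp (s * L r ω)) μ :=
      fun r => integrable_exp_mul_of_bdd μ (L r) (c r) s hsnn (hmeas r) (hbdd r)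
    have hintS : Integrable (fun ω => exp (s * S ω)) μ :=
      hindep.integrable_exp_mul_sum hmeas (fun r _ => hint r)
    have hchern := measure_ge_le_exp_mul_mgf (X := S) (μ := μ) ((2 + T) * d) hsnn hintS
    have hLint : ∀ r, Integrable (L r) μ := by
      intro r
      refine Integrable.mono' (integrable_const (c r)) (hmeas r).aestronglyMeasurable ?_
      filter_upwards [hbdd r] with ω ⟨h0, h1⟩
      rw [Real.norm_eq_abs, abs_of_nonneg h0]; exact h1
    have hES : ∫ ω, S ω ∂μ = ∑ r, ∫ ω, L r ω ∂μ := by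
      simp only [hSapp]
      exact integral_finset_sum _ fun r _ => hLint r
    have hmgf : mgf S μ s ≤ exp (s * (∫ ω, S ω ∂μ) + s ^ 2 * C / 8) := by
      rw [hS, hindep.mgf_sum hmeas]
      calc (∏ r, mgf (L r) μ s)
          ≤ ∏ r, exp (s * (∫ ω, L r ω ∂μ) + s ^ 2 * (c r) ^ 2 / 8) :=
            Finset.prod_le_prod (fun r _ => mgf_nonneg)
              (fun r _ => mgf_le_hoeffding μ (L r) (c r) s (hcnn r) hsnn (hmeas r) (hbdd r))
        _ = exp (∑ r, (s * (∫ ω, L r ω ∂μ) + s ^ 2 * (c r) ^ 2 / 8)) :=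
            (Real.exp_sum _ _).symm
        _ = exp (s * (∫ ω, S ω ∂μ) + s ^ 2 * C / 8) := by
            rw [Finset.sum_add_distrib, ← Finset.mul_sum, ← hES, hC, ← Finset.sum_div,
              ← Finset.mul_sum]
    have hESle : ∫ ω, S ω ∂μ ≤ 2 * d := by
      have : (∫ ω, S ω ∂μ) = ∫ ω, ∑ r, L r ω ∂μ := by
        congr 1; funext ω; exact hSapp ω
      rw [this]; exact hE
    have hexp_bound : exp (-s * ((2 + T) * d)) * mgf S μ s ≤ exp (-3 * Real.log n) := by
      calc exp (-s * ((2 + T) * d)) * mgf S μ s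
          ≤ exp (-s * ((2 + T) * d)) * exp (s * (∫ ω, S ω ∂μ) + s ^ 2 * C / 8) := by
            exact mul_le_mul_of_nonneg_left hmgf (exp_pos _).le
        _ = exp (-s * ((2 + T) * d) + s * (∫ ω, S ω ∂μ) + s ^ 2 * C / 8) := by
            rw [← Real.exp_add]; ring_nf
        _ ≤ exp (-s * ((2 + T) * d) + s * (2 * d) + s ^ 2 * C / 8) := by
            apply Real.exp_le_exp.2
            have := mul_le_mul_of_nonneg_left hESle hsnn
            linarith
        _ = exp (-(2 * T ^ 2 * d ^ 2) / C) := by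
            congr 1
            rw [hs]; field_simp; ring
        _ ≤ exp (-3 * Real.log n) := by
            apply Real.exp_le_exp.2
            rw [div_le_iff₀ hC0, hT2]
            nlinarith [mul_le_mul_of_nonneg_left hCle (by positivity : (0:ℝ) ≤ 3 * Real.log n)]
    have hfinal : (μ {ω | (2 + T) * d ≤ S ω}).toReal ≤ n ^ (-2 : ℝ) := by
      calc (μ {ω | (2 + T) * d ≤ S ω}).toReal
          ≤ exp (-s * ((2 + T) * d)) * mgf S μ s := hchern
        _ ≤ exp (-3 * Real.log n) := hexp_bound
        _ ≤ exp (-2 * Real.log n) := Real.exp_le_exp.2 (by nlinarith)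
        _ = n ^ (-2 : ℝ) := hnrpow.symm
    have hset : {ω | (2 + T) * d ≤ ∑ r, L r ω} = {ω | (2 + T) * d ≤ S ω} := by
      ext ω; simp [hSapp]
    rw [hset]
    rw [ENNReal.le_ofReal_iff_toReal_le (measure_ne_top μ _) (by positivity)]
    exact hfinal
end

section
/- Let R be a finite index set and let (L_r)_{r∈R} be mutually independent nonnegative real-valued random variables on a common probability space with 0 ≤ L_r ≤ m_r·n_r almost surely, where n_r are natural numbers, 0 < ε < 1, and m_r are constants with 0 < m_r ≤ ε·d for a constant d > 0. Suppose E[∑_{r∈R} L_r] ≤ 2·d and set Δ_E := ∑_{r∈R} n_r². Then for every real n ≥ 1, P( ∑_{r∈R} L_r ≥ (2 + ε·√((3/2)·(log n)·Δ_E))·d ) ≤ n^{−2}. -/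
open MeasureTheory ProbabilityTheory


lemma hoeffding_key (p u : ℝ) (hp0 : 0 ≤ p) (hp1 : p ≤ 1) :
    1 - p + p * Real.exp u ≤ Real.exp (p * u + u ^ 2 / 8) := by
  set D : ℝ → ℝ := fun v => 1 - p + p * Real.exp v with hDdef
  have hD : ∀ v, 0 < D v := by
    intro v
    rcases hp1.lt_or_eq with h | h
    · have : 0 ≤ p * Real.exp v := mul_nonneg hp0 (Real.exp_pos v).le
      simp only [hDdef]; linarith
    · simp only [hDdef, ← h]
      have := Real.exp_pos v
      nlinarith
  set f : ℝ → ℝ := fun v => p * v + v ^ 2 / 8 - Real.log (D v) with hfdef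
  set g : ℝ → ℝ := fun v => p + v / 4 - p * Real.exp v / D v with hgdef
  have hDD : ∀ v, HasDerivAt D (p * Real.exp v) v := fun v =>
    ((Real.hasDerivAt_exp v).const_mul p).const_add (1 - p)
  have hfd : ∀ v, HasDerivAt f (g v) v := by
    intro v
    have h1 : HasDerivAt (fun w : ℝ => p * w) p v := by
      simpa using (hasDerivAt_id v).const_mul p
    have h2 : HasDerivAt (fun w : ℝ => w ^ 2 / 8) (v / 4) v := by
      have := (hasDerivAt_pow 2 v).div_const 8
      exact this.congr_deriv (by norm_num; ring)
    have h3 : HasDerivAt (fun w => Real.log (D w)) (p * Real.exp v / D v) v :=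
      (hDD v).log (hD v).ne'
    exact (h1.add h2).sub h3
  have hgd : ∀ v, HasDerivAt g (1 / 4 - p * (1 - p) * Real.exp v / (D v) ^ 2) v := by
    intro v
    have h1 : HasDerivAt (fun w : ℝ => p + w / 4) (1 / 4) v := by
      simpa using ((hasDerivAt_id v).div_const 4).const_add p
    have h2 : HasDerivAt (fun w => p * Real.exp w / D w)
        ((p * Real.exp v * D v - p * Real.exp v * (p * Real.exp v)) / (D v) ^ 2) v :=
      ((Real.hasDerivAt_exp v).const_mul p).div (hDD v) (hD v).ne'
    have := h1.sub h2
    have hDv := (hD v).ne'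
    exact this.congr_deriv (by rw [show p * Real.exp v * D v - p * Real.exp v * (p * Real.exp v) = p * (1 - p) * Real.exp v by simp only [hDdef]; ring])
  have hg'0 : ∀ v, 0 ≤ 1 / 4 - p * (1 - p) * Real.exp v / (D v) ^ 2 := by
    intro v
    have hDv := hD v
    have h1 : 4 * (p * (1 - p) * Real.exp v) ≤ (D v) ^ 2 := by
      have : (D v) ^ 2 - 4 * (p * (1 - p) * Real.exp v)
          = ((1 - p) - p * Real.exp v) ^ 2 := by
        simp only [hDdef]; ring
      nlinarith [sq_nonneg ((1 - p) - p * Real.exp v)]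
    rw [sub_nonneg, div_le_iff₀ (by positivity)]
    set A := p * (1 - p) * Real.exp v
    set B := D v ^ 2
    linarith
  have hgmono : Monotone g :=
    monotone_of_deriv_nonneg (fun v => (hgd v).differentiableAt) (fun v => by
      rw [(hgd v).deriv]; exact hg'0 v)
  have hg0 : g 0 = 0 := by
    simp [hgdef, hDdef]
  have hf0 : f 0 = 0 := by
    simp [hfdef, hDdef]
  have hfnonneg : 0 ≤ f u := by
    rcases le_total 0 u with hu | hu
    · have hmono : MonotoneOn f (Set.Ici (0 : ℝ)) := by
        apply monotoneOn_of_deriv_nonneg (convex_Ici 0)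
          (Continuous.continuousOn (by
            fun_prop (disch := intro x; exact (hD x).ne')))
          (fun x hx => (hfd x).differentiableAt.differentiableWithinAt)
        intro x hx
        rw [(hfd x).deriv]
        have : (0 : ℝ) ≤ x := le_of_lt (by simpa using hx)
        calc (0 : ℝ) = g 0 := hg0.symm
          _ ≤ g x := hgmono this
      have := hmono Set.self_mem_Ici (Set.mem_Ici.mpr hu) hu
      linarith [hf0 ▸ this]
    · have hmono : AntitoneOn f (Set.Iic (0 : ℝ)) := by
        apply antitoneOn_of_deriv_nonpos (convex_Iic 0)
          (Continuous.continuousOn (by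
            fun_prop (disch := intro x; exact (hD x).ne')))
          (fun x hx => (hfd x).differentiableAt.differentiableWithinAt)
        intro x hx
        rw [(hfd x).deriv]
        have hx0 : x ≤ (0 : ℝ) := le_of_lt (by simpa using hx)
        calc g x ≤ g 0 := hgmono hx0
          _ = 0 := hg0
      have := hmono (Set.mem_Iic.mpr hu) Set.self_mem_Iic hu
      linarith [hf0 ▸ this]
  have hlog : Real.log (D u) ≤ p * u + u ^ 2 / 8 := by
    simp only [hfdef] at hfnonneg
    linarith
  calc 1 - p + p * Real.exp u = D u := rfl
    _ ≤ Real.exp (p * u + u ^ 2 / 8) := by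
        rw [← Real.exp_log (hD u)]
        exact Real.exp_le_exp.mpr hlog

lemma mgf_le_of_bounded {Ω : Type*} [MeasurableSpace Ω] (μ : Measure Ω) [IsProbabilityMeasure μ]
    (X : Ω → ℝ) (hX : Measurable X) {b : ℝ} (hb : 0 ≤ b) (t : ℝ)
    (hbdd : ∀ᵐ ω ∂μ, 0 ≤ X ω ∧ X ω ≤ b) :
    mgf X μ t ≤ Real.exp (t * (∫ ω, X ω ∂μ) + t ^ 2 * b ^ 2 / 8) := by
  have hXint : Integrable X μ := by
    refine Integrable.mono' (integrable_const b) hX.aestronglyMeasurable ?_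
    filter_upwards [hbdd] with ω ⟨h0, h1⟩
    rw [Real.norm_eq_abs, abs_of_nonneg h0]; exact h1
  have hexpint : Integrable (fun ω => Real.exp (t * X ω)) μ := by
    refine Integrable.mono' (integrable_const (Real.exp (|t| * b)))
      (hX.const_mul t).exp.aestronglyMeasurable ?_
    filter_upwards [hbdd] with ω ⟨h0, h1⟩
    rw [Real.norm_eq_abs, abs_of_nonneg (Real.exp_pos _).le]
    refine Real.exp_le_exp.mpr ?_
    calc t * X ω ≤ |t * X ω| := le_abs_self _
      _ = |t| * |X ω| := abs_mul _ _
      _ ≤ |t| * b := by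
          refine mul_le_mul_of_nonneg_left ?_ (abs_nonneg t)
          rw [abs_of_nonneg h0]; exact h1
  rcases hb.eq_or_lt with hb0 | hb0
  · have hX0 : ∀ᵐ ω ∂μ, X ω = 0 := by
      filter_upwards [hbdd] with ω ⟨h0, h1⟩
      rw [← hb0] at h1; linarith
    have h1 : mgf X μ t = 1 := by
      rw [mgf]
      rw [integral_congr_ae (g := fun _ => (1 : ℝ)) ?_]
      · simp
      · filter_upwards [hX0] with ω h; simp [h]
    have h2 : ∫ ω, X ω ∂μ = 0 := by
      rw [integral_congr_ae (g := fun _ => (0 : ℝ)) ?_]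
      · simp
      · filter_upwards [hX0] with ω h; simp [h]
    rw [h1, h2, ← hb0]
    simp
  · set M := ∫ ω, X ω ∂μ with hM
    have hM0 : 0 ≤ M := integral_nonneg_of_ae (by filter_upwards [hbdd] with ω h; exact h.1)
    have hMb : M ≤ b := by
      calc M ≤ ∫ _, b ∂μ := by
            refine integral_mono_ae hXint (integrable_const b) ?_
            filter_upwards [hbdd] with ω h; exact h.2
        _ = b := by simp
    set p := M / b with hp
    have hp0 : 0 ≤ p := div_nonneg hM0 hb
    have hp1 : p ≤ 1 := by rw [hp, div_le_one hb0]; exact hMb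
    have hpoint : ∀ᵐ ω ∂μ, Real.exp (t * X ω)
        ≤ 1 + X ω * ((Real.exp (t * b) - 1) / b) := by
      filter_upwards [hbdd] with ω ⟨h0, h1⟩
      set lam := X ω / b with hlam
      have hlam0 : 0 ≤ lam := div_nonneg h0 hb
      have hlam1 : lam ≤ 1 := by rw [hlam, div_le_one hb0]; exact h1
      have hconv := convexOn_exp.2 (Set.mem_univ (0 : ℝ)) (Set.mem_univ (t * b))
        (by linarith : (0:ℝ) ≤ 1 - lam) hlam0 (by ring)
      have hx : (1 - lam) • (0 : ℝ) + lam • (t * b) = t * X ω := by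
        simp only [smul_eq_mul, mul_zero, zero_add, hlam]
        field_simp
      rw [hx] at hconv
      simp only [smul_eq_mul, Real.exp_zero, mul_one] at hconv
      calc Real.exp (t * X ω) ≤ (1 - lam) * 1 + lam * Real.exp (t * b) := by
            simpa using hconv
        _ = 1 + X ω * ((Real.exp (t * b) - 1) / b) := by
            simp only [hlam]; field_simp; ring
    have hint2 : Integrable (fun ω => 1 + X ω * ((Real.exp (t * b) - 1) / b)) μ :=
      (integrable_const 1).add (hXint.mul_const _)
    have hstep : mgf X μ t ≤ 1 - p + p * Real.exp (t * b) := by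
      calc mgf X μ t ≤ ∫ ω, (1 + X ω * ((Real.exp (t * b) - 1) / b)) ∂μ :=
            integral_mono_ae hexpint hint2 hpoint
        _ = 1 + M * ((Real.exp (t * b) - 1) / b) := by
            rw [integral_add (integrable_const 1) (hXint.mul_const _),
              integral_mul_const]
            simp [hM]
        _ = 1 - p + p * Real.exp (t * b) := by
            simp only [hp]; field_simp; ring
    calc mgf X μ t ≤ 1 - p + p * Real.exp (t * b) := hstep
      _ ≤ Real.exp (p * (t * b) + (t * b) ^ 2 / 8) := hoeffding_key p (t * b) hp0 hp1
      _ = Real.exp (t * M + t ^ 2 * b ^ 2 / 8) := by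
          congr 1
          rw [hp]
          field_simp

lemma integrable_of_bounded' {Ω : Type*} [MeasurableSpace Ω] (μ : Measure Ω)
    [IsProbabilityMeasure μ] (X : Ω → ℝ) (hX : Measurable X) (b : ℝ)
    (hbdd : ∀ᵐ ω ∂μ, 0 ≤ X ω ∧ X ω ≤ b) : Integrable X μ := by
  refine Integrable.mono' (integrable_const b) hX.aestronglyMeasurable ?_
  filter_upwards [hbdd] with ω ⟨h0, h1⟩
  rw [Real.norm_eq_abs, abs_of_nonneg h0]; exact h1

lemma integrable_exp_mul_of_bounded' {Ω : Type*} [MeasurableSpace Ω] (μ : Measure Ω)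
    [IsProbabilityMeasure μ] (X : Ω → ℝ) (hX : Measurable X) (b t : ℝ)
    (hbdd : ∀ᵐ ω ∂μ, 0 ≤ X ω ∧ X ω ≤ b) :
    Integrable (fun ω => Real.exp (t * X ω)) μ := by
  refine Integrable.mono' (integrable_const (Real.exp (|t| * b)))
    (hX.const_mul t).exp.aestronglyMeasurable ?_
  filter_upwards [hbdd] with ω ⟨h0, h1⟩
  rw [Real.norm_eq_abs, abs_of_nonneg (Real.exp_pos _).le]
  refine Real.exp_le_exp.mpr ?_
  calc t * X ω ≤ |t * X ω| := le_abs_self _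
    _ = |t| * |X ω| := abs_mul _ _
    _ ≤ |t| * b := by
        refine mul_le_mul_of_nonneg_left ?_ (abs_nonneg t)
        rw [abs_of_nonneg h0]; exact h1

/-- Sharpened edge capacity violation bound in the cost-minimization variant under
the stronger demand assumption `m r ≤ ε * d` with `0 < ε < 1`: the probability of
exceeding `(2 + ε √((3/2) (log n) Δ_E)) d` is at most `n⁻²`. -/
theorem edge_capacity_violation_cost_eps {Ω : Type*} [MeasurableSpace Ω] (μ : Measure Ω)
    [IsProbabilityMeasure μ]
    {R : Type*} [Fintype R] (L : R → Ω → ℝ) (m : R → ℝ) (nE : R → ℕ) (d ε : ℝ)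
    (hmeas : ∀ r, Measurable (L r))
    (hindep : iIndepFun L μ)
    (hbdd : ∀ r, ∀ᵐ ω ∂μ, 0 ≤ L r ω ∧ L r ω ≤ m r * (nE r : ℝ))
    (hd : 0 < d)
    (hε0 : 0 < ε) (hε1 : ε < 1)
    (hm : ∀ r, 0 < m r ∧ m r ≤ ε * d)
    (hE : ∫ ω, ∑ r, L r ω ∂μ ≤ 2 * d) :
    ∀ n : ℝ, 1 ≤ n →
      μ {ω | (2 + ε * Real.sqrt ((3 / 2) * Real.log n * ∑ r, ((nE r : ℝ)) ^ 2)) * d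
              ≤ ∑ r, L r ω}
        ≤ ENNReal.ofReal (n ^ (-2 : ℝ)) := by
  intro n hn
  rcases hn.eq_or_lt with hn1 | hn1
  · -- n = 1 : RHS = 1
    have : n ^ (-2 : ℝ) = 1 := by rw [← hn1]; simp
    rw [this, ENNReal.ofReal_one]
    exact prob_le_one
  -- n > 1
  have hlogn : 0 < Real.log n := Real.log_pos hn1
  set Δ : ℝ := ∑ r, ((nE r : ℝ)) ^ 2 with hΔdef
  have hΔ0 : 0 ≤ Δ := Finset.sum_nonneg fun r _ => sq_nonneg _
  rcases hΔ0.eq_or_lt with hΔz | hΔpos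
  · -- Δ = 0 : all loads vanish a.e.
    have hnEz : ∀ r, (nE r : ℝ) = 0 := by
      intro r
      have := (Finset.sum_eq_zero_iff_of_nonneg
        (fun r (_ : r ∈ Finset.univ) => sq_nonneg ((nE r : ℝ)))).mp hΔz.symm r (Finset.mem_univ r)
      exact pow_eq_zero_iff two_ne_zero |>.mp this
    have hzero : ∀ᵐ ω ∂μ, ∑ r, L r ω = 0 := by
      have : ∀ᵐ ω ∂μ, ∀ r, 0 ≤ L r ω ∧ L r ω ≤ m r * (nE r : ℝ) := ae_all_iff.mpr hbdd
      filter_upwards [this] with ω h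
      refine Finset.sum_eq_zero fun r _ => le_antisymm ?_ (h r).1
      have := (h r).2
      rw [hnEz r, mul_zero] at this
      exact this
    have hnull : ∀ᵐ ω ∂μ, ω ∉ {ω | (2 + ε * Real.sqrt ((3 / 2) * Real.log n * Δ)) * d
        ≤ ∑ r, L r ω} := by
      filter_upwards [hzero] with ω h
      simp only [Set.mem_setOf_eq, not_le, h]
      rw [← hΔz]
      simp only [mul_zero, Real.sqrt_zero]
      positivity
    rw [(measure_eq_zero_iff_ae_notMem (μ := μ)).mpr hnull]
    exact zero_le
  -- main case: Δ > 0
  set b : R → ℝ := fun r => m r * (nE r : ℝ) with hbdef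
  have hb0 : ∀ r, 0 ≤ b r := fun r => mul_nonneg (hm r).1.le (Nat.cast_nonneg _)
  set B : ℝ := ∑ r, (b r) ^ 2 with hBdef
  have hBΔ : B ≤ ε ^ 2 * d ^ 2 * Δ := by
    rw [hBdef, hΔdef, Finset.mul_sum]
    refine Finset.sum_le_sum fun r _ => ?_
    have h1 : b r ≤ ε * d * (nE r : ℝ) :=
      mul_le_mul_of_nonneg_right (hm r).2 (Nat.cast_nonneg _)
    calc (b r) ^ 2 ≤ (ε * d * (nE r : ℝ)) ^ 2 := pow_le_pow_left₀ (hb0 r) h1 2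
      _ = ε ^ 2 * d ^ 2 * (nE r : ℝ) ^ 2 := by ring
  have hB0 : 0 < B := by
    obtain ⟨r, -, hr⟩ := Finset.exists_ne_zero_of_sum_ne_zero (hΔpos.ne' : Δ ≠ 0)
    have hnr : (0 : ℝ) < (nE r : ℝ) := by
      rcases Nat.eq_zero_or_pos (nE r) with h | h
      · exfalso; exact hr (by simp [h])
      · exact_mod_cast h
    have hbr : 0 < b r := mul_pos (hm r).1 hnr
    calc (0 : ℝ) < (b r) ^ 2 := by positivity
      _ ≤ B := Finset.single_le_sum (fun r _ => sq_nonneg (b r)) (Finset.mem_univ r)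
  set s : ℝ := ε * d * Real.sqrt ((3 / 2) * Real.log n * Δ) with hsdef
  have hsq : 0 < (3 / 2) * Real.log n * Δ := by positivity
  have hs0 : 0 < s := mul_pos (mul_pos hε0 hd) (Real.sqrt_pos.mpr hsq)
  have hs2 : s ^ 2 = ε ^ 2 * d ^ 2 * ((3 / 2) * Real.log n * Δ) := by
    rw [hsdef, mul_pow, mul_pow, Real.sq_sqrt hsq.le]
  set t : ℝ := 4 * s / B with htdef
  have ht0 : 0 < t := by positivity
  set a : ℝ := (2 + ε * Real.sqrt ((3 / 2) * Real.log n * Δ)) * d with hadef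
  have has : a = 2 * d + s := by rw [hadef, hsdef]; ring
  have hint : ∀ r, Integrable (fun ω => Real.exp (t * L r ω)) μ := fun r =>
    integrable_exp_mul_of_bounded' μ (L r) (hmeas r) (b r) t (hbdd r)
  have hLint : ∀ r, Integrable (L r) μ := fun r =>
    integrable_of_bounded' μ (L r) (hmeas r) (b r) (hbdd r)
  have hchernoff := measure_ge_le_exp_mul_mgf (μ := μ) (X := ∑ r, L r) a ht0.le
    (hindep.integrable_exp_mul_sum hmeas (fun r _ => hint r))
  have hseteq : {ω | a ≤ ∑ r, L r ω} = {ω | a ≤ (∑ r, L r) ω} := by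
    simp [Finset.sum_apply]
  have hmgf : mgf (∑ r, L r) μ t
      ≤ Real.exp (t * (∫ ω, ∑ r, L r ω ∂μ) + t ^ 2 * B / 8) := by
    rw [hindep.mgf_sum hmeas]
    calc ∏ r, mgf (L r) μ t
        ≤ ∏ r, Real.exp (t * (∫ ω, L r ω ∂μ) + t ^ 2 * (b r) ^ 2 / 8) :=
          Finset.prod_le_prod (fun r _ => mgf_nonneg)
            (fun r _ => mgf_le_of_bounded μ (L r) (hmeas r) (hb0 r) t (hbdd r))
      _ = Real.exp (∑ r, (t * (∫ ω, L r ω ∂μ) + t ^ 2 * (b r) ^ 2 / 8)) :=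
          (Real.exp_sum _ _).symm
      _ = Real.exp (t * (∫ ω, ∑ r, L r ω ∂μ) + t ^ 2 * B / 8) := by
          rw [integral_finset_sum _ (fun r _ => hLint r)]
          congr 1
          rw [Finset.sum_add_distrib]
          congr 1
          · rw [← Finset.mul_sum]
          · rw [hBdef, Finset.mul_sum, Finset.sum_div]
  have hES : ∫ ω, ∑ r, L r ω ∂μ ≤ 2 * d := hE
  have hreal : (μ {ω | a ≤ (∑ r, L r) ω}).toReal ≤ n ^ (-2 : ℝ) := by
    calc (μ {ω | a ≤ (∑ r, L r) ω}).toReal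
        ≤ Real.exp (-t * a) * mgf (∑ r, L r) μ t := hchernoff
      _ ≤ Real.exp (-t * a) * Real.exp (t * (∫ ω, ∑ r, L r ω ∂μ) + t ^ 2 * B / 8) :=
          mul_le_mul_of_nonneg_left hmgf (Real.exp_pos _).le
      _ = Real.exp (-t * a + (t * (∫ ω, ∑ r, L r ω ∂μ) + t ^ 2 * B / 8)) :=
          (Real.exp_add _ _).symm
      _ ≤ Real.exp (-t * a + (t * (2 * d) + t ^ 2 * B / 8)) := by
          refine Real.exp_le_exp.mpr ?_
          have := mul_le_mul_of_nonneg_left hES ht0.le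
          linarith
      _ = Real.exp (-t * s + t ^ 2 * B / 8) := by rw [has]; ring_nf
      _ = Real.exp (-(2 * s ^ 2 / B)) := by
          congr 1
          rw [htdef]
          field_simp
          ring
      _ ≤ Real.exp (-(2 * Real.log n)) := by
          refine Real.exp_le_exp.mpr (neg_le_neg ?_)
          rw [le_div_iff₀ hB0]
          have h1 : Real.log n * B ≤ Real.log n * (ε ^ 2 * d ^ 2 * Δ) :=
            mul_le_mul_of_nonneg_left hBΔ hlogn.le
          nlinarith [hs2, hlogn, hΔpos, sq_nonneg (ε * d)]
      _ = n ^ (-2 : ℝ) := by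
          rw [Real.rpow_def_of_pos (by linarith : (0 : ℝ) < n)]
          ring_nf
  rw [hseteq, ← ENNReal.ofReal_toReal (measure_ne_top μ _)]
  exact ENNReal.ofReal_le_ofReal hreal
end
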